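/- Let V = ℂ(q)^n with standard basis |0⟩,…,|n-1⟩ and let the operators x_i^±(l), φ_i(m), ψ_i(m) act on V ⊗ ℂ(q)[z,z^{-1}] via the evaluation formulas: x_i^+(w)|j⟩ = δ_{ij} δ(w/(q^i z))|i-1⟩, x_i^-(w)|j⟩ = δ_{i-1,j} δ(w/(q^i z))|i⟩, φ_i(w)|i-1⟩ = (q^{-1} - q^{-i+1} w/z)/(1 - q^{-i} w/z)|i-1⟩, φ_i(w)|i⟩ = (q - q^{-i-1} w/z)/(1 - q^{-i} w/z)|i⟩, φ_i(w)|j⟩ = |j⟩ otherwise, with c acting by 0. Then the commutator relation [x_i^+(z'), x_j^-(w)] = (δ_{ij}/(q - q^{-1}))(δ(z'/w)ψ_i(w) - δ(z'/w)φ_i(z')) of U_q(ŝl_n) at level 0 holds on each basis vector |j⟩. -/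

import Mathlib

/-!
STATEMENT 4: The n-dimensional evaluation (vector) representation of U_q(ŝl_n) at level 0
(c = 0) satisfies the commutator relation
  [x_i^+(z'), x_j^-(w)] = (δ_{ij}/(q - q⁻¹)) (δ(z'/w) ψ_i(w) - δ(z'/w) φ_i(z'))
on each basis vector |j'⟩.  Everything is expanded coefficientwise: the operators are
recorded as matrices of Laurent coefficients, with
  x_i^+(l)|j⟩ = δ_{ij} (q^i z)^l |i-1⟩,   x_i^-(m)|j⟩ = δ_{i-1,j} (q^i z)^m |i⟩,
and ψ_i(r) (r ≥ 0), φ_i(r) (r ≤ 0) the expansion coefficients of the rational functions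
in z/w (resp. w/z) given in Lemma 3.1.  The coefficient of z'^{-l} w^{-m} in
δ(z'/w)ψ_i(w) (resp. δ(z'/w)φ_i(z')) is ψ_i(l+m) (resp. φ_i(l+m)).
Conventions: |-1⟩ = |n⟩ = 0.
-/

noncomputable section

variable (F : Type*) [Field F]

/-- (q^i z)^l -/
def evCoef (q z : Fˣ) (i l : ℤ) : F := ((q ^ i * z) ^ l : Fˣ)

/-- matrix of x_i^+(l):  x_i^+(l)|j⟩ = δ_{ij} (q^i z)^l |i-1⟩. -/
def xpM (q z : Fˣ) (n : ℕ) (i l : ℤ) : Matrix (Fin n) (Fin n) F :=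
  fun r c => if (r : ℤ) = i - 1 ∧ (c : ℤ) = i then evCoef F q z i l else 0

/-- matrix of x_i^-(m):  x_i^-(m)|j⟩ = δ_{i-1,j} (q^i z)^m |i⟩. -/
def xmM (q z : Fˣ) (n : ℕ) (i m : ℤ) : Matrix (Fin n) (Fin n) F :=
  fun r c => if (r : ℤ) = i ∧ (c : ℤ) = i - 1 then evCoef F q z i m else 0

/-- matrix of ψ_i(r), the coefficient of w^{-r} in the expansion of ψ_i(w) in ℂ(q)[[z/w]];
ψ_i(r) = 0 for r < 0. -/
def psiM (q z : Fˣ) (n : ℕ) (i r : ℤ) : Matrix (Fin n) (Fin n) F :=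
  Matrix.diagonal fun j =>
    if r = 0 then
      (if (j : ℤ) = i - 1 then (q : F) else if (j : ℤ) = i then (q : F)⁻¹ else 1)
    else if 0 < r then
      (if (j : ℤ) = i - 1 then ((q : F) - (q : F)⁻¹) * evCoef F q z i r
       else if (j : ℤ) = i then ((q : F)⁻¹ - (q : F)) * evCoef F q z i r else 0)
    else 0

/-- matrix of φ_i(r), the coefficient of z^{-r} in the expansion of φ_i(z) in ℂ(q)[[w/z]];
φ_i(r) = 0 for r > 0. -/
def phiM (q z : Fˣ) (n : ℕ) (i r : ℤ) : Matrix (Fin n) (Fin n) F :=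
  Matrix.diagonal fun j =>
    if r = 0 then
      (if (j : ℤ) = i - 1 then (q : F)⁻¹ else if (j : ℤ) = i then (q : F) else 1)
    else if r < 0 then
      (if (j : ℤ) = i - 1 then ((q : F)⁻¹ - (q : F)) * evCoef F q z i r
       else if (j : ℤ) = i then ((q : F) - (q : F)⁻¹) * evCoef F q z i r else 0)
    else 0

lemma evCoef_add (q z : Fˣ) (i l m : ℤ) :
    evCoef F q z i l * evCoef F q z i m = evCoef F q z i (l + m) := by
  rw [evCoef, evCoef, evCoef, ← Units.val_mul, ← zpow_add]
lemma evCoef_zero (q z : Fˣ) (i : ℤ) : evCoef F q z i 0 = 1 := by simp [evCoef]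

lemma mulA (q z : Fˣ) (n : ℕ) (i j l m : ℤ) (hi1 : 1 ≤ i) (hi2 : i ≤ (n:ℤ)-1) :
    xpM F q z n i l * xmM F q z n j m =
      fun (r c : Fin n) => if i = j ∧ (r:ℤ) = i - 1 ∧ (c:ℤ) = i - 1
        then evCoef F q z i (l+m) else 0 := by
  funext r c
  have hn' : i.toNat < n := by omega
  have hik : ((⟨i.toNat, hn'⟩ : Fin n) : ℤ) = i := by simp; omega
  rw [Matrix.mul_apply, Finset.sum_eq_single (⟨i.toNat, hn'⟩ : Fin n)]
  · simp only [xpM, xmM, hik]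
    by_cases hij : i = j
    · subst hij
      by_cases hr : (r:ℤ) = i - 1 <;> by_cases hc : (c:ℤ) = i - 1 <;>
        simp [hr, hc, evCoef_add]
    · simp [hij]
  · intro k _ hk
    have hki : (k:ℤ) ≠ i := by
      intro h; apply hk; apply Fin.ext
      have : (k:ℤ) = ((⟨i.toNat, hn'⟩ : Fin n) : ℤ) := by rw [h, hik]
      exact_mod_cast this
    simp [xpM, xmM, hki]
  · simp

lemma mulB (q z : Fˣ) (n : ℕ) (i j l m : ℤ) (hj1 : 1 ≤ j) (hj2 : j ≤ (n:ℤ)-1) :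
    xmM F q z n j m * xpM F q z n i l =
      fun (r c : Fin n) => if i = j ∧ (r:ℤ) = i ∧ (c:ℤ) = i
        then evCoef F q z i (l+m) else 0 := by
  funext r c
  have hn' : (j-1).toNat < n := by omega
  have hik : ((⟨(j-1).toNat, hn'⟩ : Fin n) : ℤ) = j - 1 := by simp; omega
  rw [Matrix.mul_apply, Finset.sum_eq_single (⟨(j-1).toNat, hn'⟩ : Fin n)]
  · simp only [xpM, xmM, hik]
    by_cases hij : i = j
    · subst hij
      by_cases hr : (r:ℤ) = i <;> by_cases hc : (c:ℤ) = i <;>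
        simp [hr, hc, mul_comm, evCoef_add]
    · have h2 : j - 1 ≠ i - 1 := by omega
      simp [hij, h2]
  · intro k _ hk
    have hki : (k:ℤ) ≠ j - 1 := by
      intro h; apply hk; apply Fin.ext
      have : (k:ℤ) = ((⟨(j-1).toNat, hn'⟩ : Fin n) : ℤ) := by rw [h, hik]
      exact_mod_cast this
    simp [xpM, xmM, hki]
  · simp

theorem stmt4 (q z : Fˣ) (hq : ((q : F)) ^ 2 ≠ 1) (n : ℕ) (hn : 2 ≤ n)
    (i j : ℤ) (hi1 : 1 ≤ i) (hi2 : i ≤ (n : ℤ) - 1) (hj1 : 1 ≤ j) (hj2 : j ≤ (n : ℤ) - 1) :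
    ∀ l m : ℤ,
      xpM F q z n i l * xmM F q z n j m - xmM F q z n j m * xpM F q z n i l
        = (if i = j then ((q : F) - (q : F)⁻¹)⁻¹ else 0) •
            (psiM F q z n i (l + m) - phiM F q z n i (l + m)) := by
  intro l m
  have hq0 : (q : F) ≠ 0 := Units.ne_zero q
  have hqs : (q : F) - (q : F)⁻¹ ≠ 0 := by
    intro h
    apply hq
    rw [sub_eq_zero] at h
    field_simp at h
    exact h
  have alg1 : ∀ x : F, x = ((q:F)-(q:F)⁻¹)⁻¹ * (((q:F)-(q:F)⁻¹) * x) := by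
    intro x; rw [← mul_assoc, inv_mul_cancel₀ hqs, one_mul]
  have alg2 : ∀ x : F, -x = ((q:F)-(q:F)⁻¹)⁻¹ * (((q:F)⁻¹-(q:F)) * x) := by
    intro x
    rw [show (q:F)⁻¹-(q:F) = -((q:F)-(q:F)⁻¹) by ring, neg_mul, mul_neg,
      ← mul_assoc, inv_mul_cancel₀ hqs, one_mul]
  have hd : i - 1 ≠ i := by omega
  have hd2 : i ≠ i - 1 := by omega
  rw [mulA F q z n i j l m hi1 hi2, mulB F q z n i j l m hj1 hj2]
  by_cases hij : i = j
  case neg =>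
    ext r c
    erw [Matrix.sub_apply]
    simp [hij]
  case pos =>
    subst hij
    ext r c
    erw [Matrix.sub_apply]
    simp only [Matrix.sub_apply, Matrix.smul_apply, smul_eq_mul, psiM, phiM,
      Matrix.diagonal_apply, if_pos rfl, true_and]
    by_cases hrc : r = c
    · subst hrc
      simp only [if_pos rfl, and_self]
      rcases lt_trichotomy (l + m) 0 with ht | ht | ht
      · have e1 : l + m ≠ 0 := by omega
        have e2 : ¬ (0:ℤ) < l + m := by omega
        by_cases h1 : (r:ℤ) = i - 1
        · have h2 : (r:ℤ) ≠ i := by omega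
          simp only [h1, h2, e1, e2, ht, hd, hd2, if_true, if_false, if_pos, if_neg,
            not_false_iff, sub_zero, zero_sub]
          rw [show -(((q:F)⁻¹-(q:F)) * evCoef F q z i (l+m))
              = ((q:F)-(q:F)⁻¹) * evCoef F q z i (l+m) by ring]
          exact alg1 _
        · by_cases h2 : (r:ℤ) = i
          · simp only [h1, h2, e1, e2, ht, hd, hd2, if_true, if_false, if_pos, if_neg,
              not_false_iff, zero_sub]
            rw [show -(((q:F)-(q:F)⁻¹) * evCoef F q z i (l+m))
                = ((q:F)⁻¹-(q:F)) * evCoef F q z i (l+m) by ring]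
            exact alg2 _
          · simp [h1, h2, e1, e2, ht]
      · simp only [ht, evCoef_zero, if_true, if_pos rfl]
        by_cases h1 : (r:ℤ) = i - 1
        · have h2 : (r:ℤ) ≠ i := by omega
          simp only [h1, h2, hd, hd2, if_true, if_false, if_pos, if_neg, not_false_iff,
            sub_zero]
          calc (1:F) = ((q:F)-(q:F)⁻¹)⁻¹ * (((q:F)-(q:F)⁻¹) * 1) := alg1 1
            _ = ((q:F)-(q:F)⁻¹)⁻¹ * ((q:F)-(q:F)⁻¹) := by ring
        · by_cases h2 : (r:ℤ) = i
          · simp only [h1, h2, hd, hd2, if_true, if_false, if_pos, if_neg, not_false_iff,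
              zero_sub]
            calc (-1:F) = ((q:F)-(q:F)⁻¹)⁻¹ * (((q:F)⁻¹-(q:F)) * 1) := alg2 1
              _ = ((q:F)-(q:F)⁻¹)⁻¹ * ((q:F)⁻¹-(q:F)) := by ring
          · simp [h1, h2]
      · have e1 : l + m ≠ 0 := by omega
        have e2 : ¬ l + m < (0:ℤ) := by omega
        by_cases h1 : (r:ℤ) = i - 1
        · have h2 : (r:ℤ) ≠ i := by omega
          simp only [h1, h2, e1, e2, ht, hd, hd2, if_true, if_false, if_pos, if_neg,
            not_false_iff, sub_zero]
          exact alg1 _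
        · by_cases h2 : (r:ℤ) = i
          · simp only [h1, h2, e1, e2, ht, hd, hd2, if_true, if_false, if_pos, if_neg,
              not_false_iff, zero_sub, sub_zero]
            exact alg2 _
          · simp [h1, h2, e1, e2, ht]
    · have hne : (r:ℤ) ≠ (c:ℤ) := by
        intro h; exact hrc (Fin.ext (by exact_mod_cast h))
      have hA : ¬ ((r:ℤ) = i - 1 ∧ (c:ℤ) = i - 1) := by omega
      have hB : ¬ ((r:ℤ) = i ∧ (c:ℤ) = i) := by omega
      simp [hA, hB, hrc]

end
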